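/- Suppose P is continuously differentiable with L-Lipschitz gradient, ‖∇P(x) − g‖ ≤ C₁‖s‖², ‖H‖ ≤ H_max, and s, λ satisfy g + (H+λI)s = 0 with H + λI ⪰ 0 and q(0) − q(s) = (1/2)sᵀ(H+λI)s + (λ/2)‖s‖². If λ ≥ 2L + H_max + 2(η + C₁)‖s‖ with η > 0, then P(x) − P(x+s) ≥ η‖s‖³. -/

import Mathlib

open scoped RealInnerProductSpace

/-- If `∇P` is `L`-Lipschitz, `‖∇P(x) − g‖ ≤ C₁‖s‖²`, `‖H‖ ≤ H_max`, `(s, λ)`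
satisfy the trust-region KKT conditions, and `λ ≥ 2L + H_max + 2(η + C₁)‖s‖`, then
`P(x) − P(x+s) ≥ η‖s‖³`. -/
theorem stmt15 {n : ℕ} (L Hmax C1 η lam : ℝ)
    (hL : 0 ≤ L) (hC1 : 0 ≤ C1) (hη0 : 0 < η) (hη1 : η < 1) (hlam0 : 0 ≤ lam)
    (P : EuclideanSpace ℝ (Fin n) → ℝ)
    (gP : EuclideanSpace ℝ (Fin n) → EuclideanSpace ℝ (Fin n))
    (hgrad : ∀ x, HasGradientAt P (gP x) x)
    (hlip : ∀ a b, ‖gP a - gP b‖ ≤ L * ‖a - b‖)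
    (x g s : EuclideanSpace ℝ (Fin n))
    (H : EuclideanSpace ℝ (Fin n) →L[ℝ] EuclideanSpace ℝ (Fin n))
    (hsa : IsSelfAdjoint H) (hHnorm : ‖H‖ ≤ Hmax)
    (hgerr : ‖gP x - g‖ ≤ C1 * ‖s‖ ^ 2)
    (hkkt1 : g + (H + lam • ContinuousLinearMap.id ℝ (EuclideanSpace ℝ (Fin n))) s = 0)
    (hkkt2 : ∀ v, 0 ≤ ⟪v, (H + lam • ContinuousLinearMap.id ℝ (EuclideanSpace ℝ (Fin n))) v⟫)
    (hlam : lam ≥ 2 * L + Hmax + 2 * (η + C1) * ‖s‖) :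
    P x - P (x + s) ≥ η * ‖s‖ ^ 3 := by
  have hs2 : (0:ℝ) ≤ ‖s‖ := norm_nonneg s
  -- descent lemma with constant L (we have slack, so no 1/2 needed)
  have key : |P (x + s) - P x - ⟪gP x, s⟫| ≤ L * ‖s‖ ^ 2 := by
    set h : EuclideanSpace ℝ (Fin n) → ℝ := fun y => P y - ⟪gP x, y⟫ with hh
    set D : EuclideanSpace ℝ (Fin n) → (EuclideanSpace ℝ (Fin n) →L[ℝ] ℝ) :=
      fun y => (InnerProductSpace.toDual ℝ _ (gP y - gP x) :
        EuclideanSpace ℝ (Fin n) →L[ℝ] ℝ) with hD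
    have hder : ∀ y ∈ segment ℝ x (x + s),
        HasFDerivWithinAt h (D y) (segment ℝ x (x + s)) y := by
      intro y _
      have h1 := (hgrad y).hasFDerivAt
      have h2 : HasFDerivAt (fun z : EuclideanSpace ℝ (Fin n) => ⟪gP x, z⟫)
          (InnerProductSpace.toDual ℝ _ (gP x) : EuclideanSpace ℝ (Fin n) →L[ℝ] ℝ) y := by
        have := (InnerProductSpace.toDual ℝ (EuclideanSpace ℝ (Fin n)) (gP x)).hasFDerivAt (x := y)
        convert this using 1
        funext z
        simp [InnerProductSpace.toDual_apply_apply]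
      have h3 := h1.sub h2
      have heq : (InnerProductSpace.toDual ℝ _ (gP y) : EuclideanSpace ℝ (Fin n) →L[ℝ] ℝ) -
          (InnerProductSpace.toDual ℝ _ (gP x)) = D y := by
        simp [hD, map_sub]
      rw [heq] at h3
      exact h3.hasFDerivWithinAt
    have hbound : ∀ y ∈ segment ℝ x (x + s), ‖D y‖ ≤ L * ‖s‖ := by
      intro y hy
      rw [hD]
      simp only
      rw [(InnerProductSpace.toDual ℝ (EuclideanSpace ℝ (Fin n))).norm_map]
      refine (hlip y x).trans ?_
      gcongr
      rcases hy with ⟨a, b, ha, hb, hab, rfl⟩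
      have hab' : a = 1 - b := by linarith
      subst hab'
      have : (1 - b) • x + b • (x + s) - x = b • s := by module
      rw [this, norm_smul]
      calc ‖b‖ * ‖s‖ ≤ 1 * ‖s‖ := by
            gcongr
            rw [Real.norm_eq_abs, abs_of_nonneg hb]; linarith
        _ = ‖s‖ := one_mul _
    have hmvt := (convex_segment x (x + s)).norm_image_sub_le_of_norm_hasFDerivWithin_le
      hder hbound (left_mem_segment ℝ x (x + s)) (right_mem_segment ℝ x (x + s))
    have hnorm : ‖x + s - x‖ = ‖s‖ := by simp
    rw [hnorm] at hmvt
    calc |P (x + s) - P x - ⟪gP x, s⟫| = ‖h (x + s) - h x‖ := by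
          simp only [hh, Real.norm_eq_abs]
          congr 1
          rw [inner_add_right]
          ring
      _ ≤ L * ‖s‖ * ‖s‖ := hmvt
      _ = L * ‖s‖ ^ 2 := by ring
  -- g = -(Hs + λs)
  have hg : g = -(H s + lam • s) := by
    have h0 : g + (H s + lam • s) = 0 := by
      simpa [ContinuousLinearMap.add_apply] using hkkt1
    exact eq_neg_of_add_eq_zero_left h0
  have hgs : ⟪g, s⟫ = - ⟪H s, s⟫ - lam * ‖s‖ ^ 2 := by
    rw [hg, inner_neg_left, inner_add_left, real_inner_smul_left, real_inner_self_eq_norm_sq]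
    ring
  have hHs : - ⟪H s, s⟫ ≤ Hmax * ‖s‖ ^ 2 := by
    have h1 : |⟪H s, s⟫| ≤ ‖H s‖ * ‖s‖ := abs_real_inner_le_norm _ _
    have h2 : ‖H s‖ ≤ ‖H‖ * ‖s‖ := H.le_opNorm s
    have h3 : ‖H‖ * ‖s‖ ≤ Hmax * ‖s‖ := by gcongr
    nlinarith [neg_abs_le (⟪H s, s⟫), norm_nonneg (H s)]
  have herr : ⟪gP x - g, s⟫ ≤ C1 * ‖s‖ ^ 3 := by
    calc ⟪gP x - g, s⟫ ≤ ‖gP x - g‖ * ‖s‖ := real_inner_le_norm _ _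
      _ ≤ (C1 * ‖s‖ ^ 2) * ‖s‖ := by gcongr
      _ = C1 * ‖s‖ ^ 3 := by ring
  have hgPs : ⟪gP x, s⟫ ≤ C1 * ‖s‖ ^ 3 + Hmax * ‖s‖ ^ 2 - lam * ‖s‖ ^ 2 := by
    have hsplit : ⟪gP x, s⟫ = ⟪gP x - g, s⟫ + ⟪g, s⟫ := by
      rw [inner_sub_left]; ring
    rw [hsplit, hgs]
    linarith
  have hdesc : P (x + s) - P x ≤ ⟪gP x, s⟫ + L * ‖s‖ ^ 2 := by
    have := (abs_le.mp key).2
    linarith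
  have hlam2 : (2 * L + Hmax + 2 * (η + C1) * ‖s‖) * ‖s‖ ^ 2 ≤ lam * ‖s‖ ^ 2 :=
    mul_le_mul_of_nonneg_right hlam (sq_nonneg _)
  nlinarith [sq_nonneg ‖s‖, pow_nonneg hs2 3, mul_nonneg hC1 (pow_nonneg hs2 3),
    mul_nonneg hL (sq_nonneg ‖s‖),
    mul_nonneg (mul_nonneg (add_nonneg hη0.le hC1) hs2) (sq_nonneg ‖s‖)]
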